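/- With the Weil representation of SL_2(F) on S(F²) given by ω(n(b))φ(x,y) = ψ^{-1}(bxy)φ(x,y) and ω(w)φ(x,y) = ∫ φ(u,v)ψ^{-1}(xv-yu)dudv (with ω(w^{-1}) its inverse), the function φ^m(x,y) = 1_{1+P^m}(x)1_{1+P^m}(y) is fixed by ω(n̄(c)) = ω(w^{-1})ω(n(c))ω(w) for all c ∈ P^{3m}; i.e., ω(n̄(c))φ^m = φ^m. -/

import Mathlib

open MeasureTheory

/-- `φ^m(x,y) = 1_{1+P^m}(x)·1_{1+P^m}(y)`. -/
noncomputable def phim {F : Type*} [NormedField F] (q : ℝ) (m : ℕ) : F → F → ℂ :=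
  fun x y => if ‖x - 1‖ ≤ q ^ (-(m : ℤ)) ∧ ‖y - 1‖ ≤ q ^ (-(m : ℤ)) then 1 else 0

/-- `ω(n(b))φ(x,y) = ψ⁻¹(bxy)·φ(x,y)`. -/
noncomputable def omegaN {F : Type*} [NormedField F] (ψ : F → ℂ) (b : F)
    (f : F → F → ℂ) : F → F → ℂ :=
  fun x y => ψ (-(b * x * y)) * f x y

/-- `ω(w)φ(x,y) = ∫_{F²} φ(u,v) ψ⁻¹(xv - yu) du dv`. -/
noncomputable def omegaW {F : Type*} [NormedField F] [MeasurableSpace F]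
    (μ : Measure F) (ψ : F → ℂ) (f : F → F → ℂ) : F → F → ℂ :=
  fun x y => ∫ p : F × F, f p.1 p.2 * ψ (-(x * p.2 - y * p.1)) ∂(μ.prod μ)

namespace Stmt17Aux

open scoped ENNReal

set_option linter.unusedSectionVars false

variable {F : Type*} [NormedField F] [MeasurableSpace F] {μ : Measure F}


lemma shift_set (t : F) (s : Set F) : {v : F | v + t ∈ s} = ((-t) + ·) '' s := by
  ext v
  constructor
  · intro hv
    refine ⟨v + t, hv, by ring⟩
  · rintro ⟨w, hw, rfl⟩
    have h : (-t + w) + t = w := by ring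
    show (-t + w) + t ∈ s
    rw [h]; exact hw

lemma measure_shift (hinv : ∀ (a : F) (s : Set F), μ ((a + ·) '' s) = μ s)
    (t : F) (s : Set F) : μ {v : F | v + t ∈ s} = μ s := by
  rw [shift_set]; exact hinv (-t) s

lemma ae_shift (hinv : ∀ (a : F) (s : Set F), μ ((a + ·) '' s) = μ s)
    {P : F → Prop} (hP : ∀ᵐ u ∂μ, P u) (t : F) : ∀ᵐ u ∂μ, P (u + t) := by
  rw [ae_iff] at hP ⊢
  have h : {u : F | ¬ P (u + t)} = {v : F | v + t ∈ {u : F | ¬ P u}} := rfl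
  rw [h, measure_shift hinv]
  exact hP

lemma inner_shift (hinv : ∀ (a : F) (s : Set F), μ ((a + ·) '' s) = μ s)
    {A : Set F} (hA : MeasurableSet A) (hfin : μ A ≠ ⊤) (t : F) :
    ∃ B : Set F, MeasurableSet B ∧ B ⊆ {v : F | v + t ∈ A} ∧ μ B = μ A := by
  set S : Set F := {v : F | v + t ∈ A} with hS
  have hSA : μ S = μ A := measure_shift hinv t A
  set E : Set F := toMeasurable μ S with hE
  have hSE : S ⊆ E := subset_toMeasurable μ S
  have hEm : MeasurableSet E := measurableSet_toMeasurable μ S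
  have hEμ : μ E = μ A := by rw [hE, measure_toMeasurable]; exact hSA
  set W : Set F := {v : F | v + (-t) ∈ E} with hW
  have hWμ : μ W = μ A := by rw [hW, measure_shift hinv]; exact hEμ
  have hAW : A ⊆ W := by
    intro a ha
    show a + (-t) ∈ E
    apply hSE
    show (a + -t) + t ∈ A
    rwa [(by ring : (a + -t) + t = a)]
  have hcara : μ (W ∩ A) + μ (W \ A) = μ W := measure_inter_add_diff W hA
  have hWA : W ∩ A = A := Set.inter_eq_self_of_subset_right hAW
  have hdiff0 : μ (W \ A) = 0 := by
    rw [hWA, hWμ] at hcara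
    exact ((ENNReal.add_right_inj hfin).mp (by rw [hcara, add_zero])).symm
  have hES : μ (E \ S) = 0 := by
    have h1 : W \ A = {v : F | v + (-t) ∈ E \ S} := by
      ext v
      constructor
      · rintro ⟨hvW, hvA⟩
        refine ⟨hvW, fun hvS => hvA ?_⟩
        have h2 : (v + -t) + t ∈ A := hvS
        rwa [(by ring : (v + -t) + t = v)] at h2
      · rintro ⟨hvE, hvS⟩
        refine ⟨hvE, fun hvA => hvS ?_⟩
        show (v + -t) + t ∈ A
        rwa [(by ring : (v + -t) + t = v)]
    have h3 := measure_shift hinv (-t) (E \ S)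
    rw [← h1] at h3
    rw [← h3]; exact hdiff0
  set T : Set F := toMeasurable μ (E \ S) with hT
  have hTm : MeasurableSet T := measurableSet_toMeasurable μ _
  have hT0 : μ T = 0 := by rw [hT, measure_toMeasurable]; exact hES
  refine ⟨E \ T, hEm.diff hTm, ?_, ?_⟩
  · intro v hv
    by_contra hvS
    exact hv.2 (subset_toMeasurable μ _ ⟨hv.1, hvS⟩)
  · refine le_antisymm ?_ ?_
    · calc μ (E \ T) ≤ μ E := measure_mono Set.diff_subset
        _ = μ A := hEμ
    · calc μ A = μ E := hEμ.symm
        _ ≤ μ ((E \ T) ∪ T) := measure_mono (fun x hx => by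
            by_cases hxT : x ∈ T
            · exact Or.inr hxT
            · exact Or.inl ⟨hx, hxT⟩)
        _ ≤ μ (E \ T) + μ T := measure_union_le _ _
        _ = μ (E \ T) := by rw [hT0, add_zero]

lemma lintegral_shift_le (hinv : ∀ (a : F) (s : Set F), μ ((a + ·) '' s) = μ s)
    (h : F → ℝ≥0∞) (hfin : ∫⁻ v, h v ∂μ ≠ ⊤) (t : F) :
    ∫⁻ v, h v ∂μ ≤ ∫⁻ v, h (v + t) ∂μ := by
  conv_lhs => rw [MeasureTheory.lintegral]
  refine iSup₂_le fun g hg => ?_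
  have hgle : g.lintegral μ ≤ ∫⁻ v, h v ∂μ := by
    rw [← g.lintegral_eq_lintegral μ]
    exact lintegral_mono hg
  have hfiber : ∀ x : ℝ≥0∞, x ∈ g.range → x ≠ 0 → μ (g ⁻¹' {x}) ≠ ⊤ := by
    intro x hxr hx hfib
    have hterm : x * μ (g ⁻¹' {x}) ≤ g.lintegral μ := by
      simp only [SimpleFunc.lintegral]
      exact Finset.single_le_sum (f := fun x => x * μ (g ⁻¹' {x}))
        (fun _ _ => zero_le) hxr
    rw [hfib, ENNReal.mul_top hx] at hterm
    exact hfin (top_le_iff.mp (hterm.trans hgle))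
  have hex : ∀ x : ℝ≥0∞, ∃ B : Set F, MeasurableSet B ∧ B ⊆ {v : F | v + t ∈ g ⁻¹' {x}} ∧
      ((x ∈ g.range ∧ x ≠ 0) → μ B = μ (g ⁻¹' {x})) := by
    intro x
    by_cases hx : x ∈ g.range ∧ x ≠ 0
    · obtain ⟨B, h1, h2, h3⟩ := inner_shift hinv (g.measurableSet_fiber x) (hfiber x hx.1 hx.2) t
      exact ⟨B, h1, h2, fun _ => h3⟩
    · exact ⟨∅, MeasurableSet.empty, Set.empty_subset _, fun hx' => absurd hx' hx⟩
  choose B hBm hBsub hBeq using hex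
  have hpt : ∀ v, (∑ x ∈ g.range, x * Set.indicator (B x) 1 v) ≤ h (v + t) := by
    intro v
    by_cases hv : ∃ x ∈ g.range, v ∈ B x
    · obtain ⟨x0, hx0r, hx0v⟩ := hv
      have hgv : g (v + t) = x0 := hBsub x0 hx0v
      have hsum : (∑ x ∈ g.range, x * Set.indicator (B x) 1 v) = x0 := by
        rw [Finset.sum_eq_single x0]
        · simp [Set.indicator_of_mem hx0v]
        · intro b hb hbne
          have hvb : v ∉ B b := fun hvb => hbne (by
            have := hBsub b hvb
            have h2 : g (v + t) = b := this
            rw [hgv] at h2; exact h2.symm)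
          simp [Set.indicator_of_notMem hvb]
        · intro hx0; exact absurd hx0r hx0
      rw [hsum, ← hgv]
      exact hg (v + t)
    · push_neg at hv
      rw [Finset.sum_eq_zero (fun x hx => by
        simp [Set.indicator_of_notMem (hv x hx)])]
      exact zero_le
  calc g.lintegral μ = ∑ x ∈ g.range, x * μ (g ⁻¹' {x}) := by simp only [SimpleFunc.lintegral]
    _ = ∑ x ∈ g.range, x * μ (B x) := by
        refine Finset.sum_congr rfl fun x hx => ?_
        by_cases hx0 : x = 0
        · simp [hx0]
        · rw [hBeq x ⟨hx, hx0⟩]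
    _ = ∑ x ∈ g.range, ∫⁻ v, x * Set.indicator (B x) 1 v ∂μ := by
        refine Finset.sum_congr rfl fun x hx => ?_
        rw [lintegral_const_mul x (measurable_one.indicator (hBm x)),
          lintegral_indicator_one (hBm x)]
    _ = ∫⁻ v, ∑ x ∈ g.range, x * Set.indicator (B x) 1 v ∂μ := by
        rw [lintegral_finset_sum _ (fun x _ =>
          (measurable_one.indicator (hBm x)).const_mul x)]
    _ ≤ ∫⁻ v, h (v + t) ∂μ := lintegral_mono hpt

lemma lintegral_shift (hinv : ∀ (a : F) (s : Set F), μ ((a + ·) '' s) = μ s)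
    (h : F → ℝ≥0∞) (t : F) (hfin1 : ∫⁻ v, h v ∂μ ≠ ⊤) (hfin2 : ∫⁻ v, h (v + t) ∂μ ≠ ⊤) :
    ∫⁻ v, h (v + t) ∂μ = ∫⁻ v, h v ∂μ := by
  refine le_antisymm ?_ (lintegral_shift_le hinv h hfin1 t)
  have := lintegral_shift_le hinv (fun v => h (v + t)) hfin2 (-t)
  simpa using this

lemma prod_eq_bind' (hk : AEMeasurable (fun u : F => Measure.map (Prod.mk u) μ) μ) : μ.prod μ = Measure.bind μ ((hk.mk _)) := by
  rw [Measure.prod_def, Measure.bind, Measure.bind, Measure.map_congr hk.ae_eq_mk]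

lemma lint_prod (hk : AEMeasurable (fun u : F => Measure.map (Prod.mk u) μ) μ) {h : F × F → ℝ≥0∞} (hm : Measurable h) :
    ∃ L : F → ℝ≥0∞, Measurable L ∧ (∀ᵐ u ∂μ, L u = ∫⁻ v, h (u, v) ∂μ) ∧
      ∫⁻ p, h p ∂(μ.prod μ) = ∫⁻ u, L u ∂μ := by
  refine ⟨fun u => ∫⁻ p, h p ∂(hk.mk _ u),
    (Measure.measurable_lintegral hm).comp hk.measurable_mk, ?_, ?_⟩
  · filter_upwards [hk.ae_eq_mk] with u hu
    rw [← hu]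
    exact MeasureTheory.lintegral_map hm measurable_prodMk_left
  · rw [prod_eq_bind' hk]
    exact Measure.lintegral_bind hk.measurable_mk.aemeasurable hm.aemeasurable

lemma null_slices (hk : AEMeasurable (fun u : F => Measure.map (Prod.mk u) μ) μ) {T : Set (F × F)} (hT : MeasurableSet T) (hT0 : μ.prod μ T = 0) :
    ∀ᵐ u ∂μ, μ (Prod.mk u ⁻¹' T) = 0 := by
  have hb : μ.prod μ = Measure.bind μ (hk.mk _) := prod_eq_bind' hk
  have h1 : ∫⁻ u, hk.mk _ u T ∂μ = 0 := by
    rw [← Measure.bind_apply hT hk.measurable_mk.aemeasurable, ← hb, hT0]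
  have hmeas : Measurable fun u => hk.mk _ u T :=
    (Measure.measurable_coe hT).comp hk.measurable_mk
  have h0 : ∀ᵐ u ∂μ, hk.mk _ u T = 0 := (lintegral_eq_zero_iff hmeas).mp h1
  filter_upwards [h0, hk.ae_eq_mk] with u h2 h3
  rw [← Measure.map_apply measurable_prodMk_left hT]
  rw [h3]; exact h2


lemma lkey2 (hinv : ∀ (a : F) (s : Set F), μ ((a + ·) '' s) = μ s)
    (hk : AEMeasurable (fun u : F => Measure.map (Prod.mk u) μ) μ)
    {h₁ h₂ : F × F → ℝ≥0∞} (h₁m : Measurable h₁) (h₂m : Measurable h₂) (t : F)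
    (hfin1 : ∫⁻ p, h₁ p ∂(μ.prod μ) ≠ ⊤) (hfin2 : ∫⁻ p, h₂ p ∂(μ.prod μ) ≠ ⊤)
    (hae : ∀ᵐ u ∂μ, (fun v => h₂ (u, v)) =ᵐ[μ] fun v => h₁ (u, v + t)) :
    ∫⁻ p, h₁ p ∂(μ.prod μ) = ∫⁻ p, h₂ p ∂(μ.prod μ) := by
  obtain ⟨L₁, hL₁m, hL₁eq, hL₁int⟩ := lint_prod hk h₁m
  obtain ⟨L₂, hL₂m, hL₂eq, hL₂int⟩ := lint_prod hk h₂m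
  rw [hL₁int, hL₂int]
  have hfin1' : ∀ᵐ u ∂μ, L₁ u ≠ ⊤ :=
    (ae_lt_top hL₁m (hL₁int ▸ hfin1)).mono fun u hu => hu.ne
  have hfin2' : ∀ᵐ u ∂μ, L₂ u ≠ ⊤ :=
    (ae_lt_top hL₂m (hL₂int ▸ hfin2)).mono fun u hu => hu.ne
  apply lintegral_congr_ae
  filter_upwards [hL₁eq, hL₂eq, hfin1', hfin2', hae] with u e1 e2 f1 f2 ha
  have h2eq : ∫⁻ v, h₂ (u, v) ∂μ = ∫⁻ v, h₁ (u, v + t) ∂μ := lintegral_congr_ae ha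
  rw [e1, e2, h2eq]
  refine (lintegral_shift hinv (fun v => h₁ (u, v)) t ?_ ?_).symm
  · rw [← e1]; exact f1
  · rw [← h2eq, ← e2]; exact f2

lemma lkey1 (hinv : ∀ (a : F) (s : Set F), μ ((a + ·) '' s) = μ s)
    (hk : AEMeasurable (fun u : F => Measure.map (Prod.mk u) μ) μ)
    {h₁ h₂ : F × F → ℝ≥0∞} (h₁m : Measurable h₁) (h₂m : Measurable h₂) (t : F)
    (hfin1 : ∫⁻ p, h₁ p ∂(μ.prod μ) ≠ ⊤) (hfin2 : ∫⁻ p, h₂ p ∂(μ.prod μ) ≠ ⊤)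
    (hae : ∀ᵐ u ∂μ, (fun v => h₂ (u, v)) =ᵐ[μ] fun v => h₁ (u + t, v)) :
    ∫⁻ p, h₁ p ∂(μ.prod μ) = ∫⁻ p, h₂ p ∂(μ.prod μ) := by
  obtain ⟨L₁, hL₁m, hL₁eq, hL₁int⟩ := lint_prod hk h₁m
  obtain ⟨L₂, hL₂m, hL₂eq, hL₂int⟩ := lint_prod hk h₂m
  rw [hL₁int, hL₂int]
  have hshift : ∀ᵐ u ∂μ, L₁ (u + t) = ∫⁻ v, h₁ (u + t, v) ∂μ := ae_shift hinv hL₁eq t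
  have hkey : ∀ᵐ u ∂μ, L₁ (u + t) = L₂ u := by
    filter_upwards [hshift, hL₂eq, hae] with u e1 e2 ha
    rw [e1, e2]
    exact (lintegral_congr_ae ha).symm
  have h2 : ∫⁻ u, L₁ (u + t) ∂μ = ∫⁻ u, L₂ u ∂μ := lintegral_congr_ae hkey
  rw [← h2]
  exact (lintegral_shift hinv L₁ t (hL₁int ▸ hfin1) (h2 ▸ (hL₂int ▸ hfin2))).symm

lemma fin_ofReal {ν : Measure (F × F)} {r : F × F → ℝ} (hri : Integrable r ν) :
    ∫⁻ p, ENNReal.ofReal (r p) ∂ν ≠ ⊤ := by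
  refine ne_top_of_le_ne_top hri.2.ne ?_
  refine lintegral_mono fun p => ?_
  calc ENNReal.ofReal (r p) ≤ ENNReal.ofReal |r p| := ENNReal.ofReal_le_ofReal (le_abs_self _)
    _ = (‖r p‖₊ : ℝ≥0∞) := (Real.enorm_eq_ofReal_abs _).symm

lemma real_key (hinv : ∀ (a : F) (s : Set F), μ ((a + ·) '' s) = μ s)
    (hk : AEMeasurable (fun u : F => Measure.map (Prod.mk u) μ) μ)
    {r₁ r₂ : F × F → ℝ} (h₁m : Measurable r₁) (h₂m : Measurable r₂)
    (h₁i : Integrable r₁ (μ.prod μ)) (h₂i : Integrable r₂ (μ.prod μ)) (t : F)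
    (first : Bool)
    (hae : if first then (∀ᵐ u ∂μ, (fun v => r₂ (u, v)) =ᵐ[μ] fun v => r₁ (u + t, v))
      else (∀ᵐ u ∂μ, (fun v => r₂ (u, v)) =ᵐ[μ] fun v => r₁ (u, v + t))) :
    ∫ p, r₁ p ∂(μ.prod μ) = ∫ p, r₂ p ∂(μ.prod μ) := by
  rw [integral_eq_lintegral_pos_part_sub_lintegral_neg_part h₁i,
    integral_eq_lintegral_pos_part_sub_lintegral_neg_part h₂i]
  have hpos : ∫⁻ p, ENNReal.ofReal (r₁ p) ∂(μ.prod μ) = ∫⁻ p, ENNReal.ofReal (r₂ p) ∂(μ.prod μ) := by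
    cases first with
    | true =>
      simp only [if_true] at hae
      refine lkey1 hinv hk (ENNReal.measurable_ofReal.comp h₁m)
        (ENNReal.measurable_ofReal.comp h₂m) t (fin_ofReal h₁i) (fin_ofReal h₂i) ?_
      filter_upwards [hae] with u ha
      filter_upwards [ha] with v hv
      simp only [Function.comp_apply, hv]
    | false =>
      simp only [Bool.false_eq_true, if_false] at hae
      refine lkey2 hinv hk (ENNReal.measurable_ofReal.comp h₁m)
        (ENNReal.measurable_ofReal.comp h₂m) t (fin_ofReal h₁i) (fin_ofReal h₂i) ?_
      filter_upwards [hae] with u ha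
      filter_upwards [ha] with v hv
      simp only [Function.comp_apply, hv]
  have hneg : ∫⁻ p, ENNReal.ofReal (-r₁ p) ∂(μ.prod μ) = ∫⁻ p, ENNReal.ofReal (-r₂ p) ∂(μ.prod μ) := by
    cases first with
    | true =>
      simp only [if_true] at hae
      refine lkey1 hinv hk (ENNReal.measurable_ofReal.comp h₁m.neg)
        (ENNReal.measurable_ofReal.comp h₂m.neg) t (fin_ofReal h₁i.neg) (fin_ofReal h₂i.neg) ?_
      filter_upwards [hae] with u ha
      filter_upwards [ha] with v hv
      simp only [Function.comp_apply, hv]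
    | false =>
      simp only [Bool.false_eq_true, if_false] at hae
      refine lkey2 hinv hk (ENNReal.measurable_ofReal.comp h₁m.neg)
        (ENNReal.measurable_ofReal.comp h₂m.neg) t (fin_ofReal h₁i.neg) (fin_ofReal h₂i.neg) ?_
      filter_upwards [hae] with u ha
      filter_upwards [ha] with v hv
      simp only [Function.comp_apply, hv]
  rw [hpos, hneg]

lemma complex_key (hinv : ∀ (a : F) (s : Set F), μ ((a + ·) '' s) = μ s)
    (hk : AEMeasurable (fun u : F => Measure.map (Prod.mk u) μ) μ)
    {g₁ g₂ : F × F → ℂ} (h₁m : StronglyMeasurable g₁) (h₂m : StronglyMeasurable g₂)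
    (h₁i : Integrable g₁ (μ.prod μ)) (h₂i : Integrable g₂ (μ.prod μ)) (t : F)
    (first : Bool)
    (hae : if first then (∀ᵐ u ∂μ, (fun v => g₂ (u, v)) =ᵐ[μ] fun v => g₁ (u + t, v))
      else (∀ᵐ u ∂μ, (fun v => g₂ (u, v)) =ᵐ[μ] fun v => g₁ (u, v + t))) :
    ∫ p, g₁ p ∂(μ.prod μ) = ∫ p, g₂ p ∂(μ.prod μ) := by
  have hre : ∫ p, RCLike.re (g₁ p) ∂(μ.prod μ) = ∫ p, RCLike.re (g₂ p) ∂(μ.prod μ) := by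
    refine real_key hinv hk (RCLike.measurable_re.comp h₁m.measurable)
      (RCLike.measurable_re.comp h₂m.measurable) h₁i.re h₂i.re t first ?_
    cases first with
    | true =>
      simp only [if_true] at hae ⊢
      filter_upwards [hae] with u ha
      filter_upwards [ha] with v hv
      simp only [hv]
    | false =>
      simp only [Bool.false_eq_true, if_false] at hae ⊢
      filter_upwards [hae] with u ha
      filter_upwards [ha] with v hv
      simp only [hv]
  have him : ∫ p, RCLike.im (g₁ p) ∂(μ.prod μ) = ∫ p, RCLike.im (g₂ p) ∂(μ.prod μ) := by
    refine real_key hinv hk (RCLike.measurable_im.comp h₁m.measurable)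
      (RCLike.measurable_im.comp h₂m.measurable) h₁i.im h₂i.im t first ?_
    cases first with
    | true =>
      simp only [if_true] at hae ⊢
      filter_upwards [hae] with u ha
      filter_upwards [ha] with v hv
      simp only [hv]
    | false =>
      simp only [Bool.false_eq_true, if_false] at hae ⊢
      filter_upwards [hae] with u ha
      filter_upwards [ha] with v hv
      simp only [hv]
  rw [integral_re h₁i, integral_re h₂i] at hre
  rw [integral_im h₁i, integral_im h₂i] at him
  exact Complex.ext hre him

lemma van2 (hinv : ∀ (a : F) (s : Set F), μ ((a + ·) '' s) = μ s)
    (t : F) (e : ℂ) (he : e ≠ 1) (f : F × F → ℂ)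
    (hrel : ∀ u v : F, f (u, v + t) = e * f (u, v)) :
    ∫ p, f p ∂(μ.prod μ) = 0 := by
  by_cases hint : Integrable f (μ.prod μ)
  swap
  · exact integral_undef hint
  by_cases hk : AEMeasurable (fun u : F => Measure.map (Prod.mk u) μ) μ
  swap
  · have hzero : μ.prod μ = 0 := by
      rw [Measure.prod_def, Measure.bind, Measure.map_of_not_aemeasurable hk, Measure.join_zero]
    rw [hzero]
    exact integral_zero_measure _
  obtain ⟨g, hgm, hfg⟩ : ∃ g, StronglyMeasurable g ∧ f =ᵐ[μ.prod μ] g :=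
    ⟨hint.1.mk f, hint.1.stronglyMeasurable_mk, hint.1.ae_eq_mk⟩
  have hgi : Integrable g (μ.prod μ) := hint.congr hfg
  have hegi : Integrable (fun p => e * g p) (μ.prod μ) := hgi.const_mul e
  have hegm : StronglyMeasurable (fun p => e * g p) := stronglyMeasurable_const.mul hgm
  set T : Set (F × F) := toMeasurable (μ.prod μ) {p | f p ≠ g p} with hTdef
  have hTm : MeasurableSet T := measurableSet_toMeasurable _ _
  have hT0 : μ.prod μ T = 0 := by
    rw [hTdef, measure_toMeasurable]
    exact ae_iff.mp hfg
  have hnull := null_slices hk hTm hT0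
  have hmaster : ∀ᵐ u ∂μ, (fun v => e * g (u, v)) =ᵐ[μ] fun v => g (u, v + t) := by
    filter_upwards [hnull] with u hu
    have hu' : μ {v : F | v + t ∈ Prod.mk u ⁻¹' T} = 0 := by
      rw [measure_shift hinv]; exact hu
    have hun : μ ((Prod.mk u ⁻¹' T) ∪ {v : F | v + t ∈ Prod.mk u ⁻¹' T}) = 0 :=
      measure_union_null hu hu'
    have hae2 : ∀ᵐ v ∂μ, (u, v) ∉ T ∧ (u, v + t) ∉ T := by
      rw [ae_iff]
      refine measure_mono_null ?_ hun
      intro v hv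
      simp only [Set.mem_setOf_eq, not_and_or, not_not] at hv
      rcases hv with hv | hv
      · exact Or.inl hv
      · exact Or.inr hv
    filter_upwards [hae2] with v hv
    have e1 : f (u, v) = g (u, v) := by
      by_contra hne
      exact hv.1 (subset_toMeasurable _ _ hne)
    have e2 : f (u, v + t) = g (u, v + t) := by
      by_contra hne
      exact hv.2 (subset_toMeasurable _ _ hne)
    rw [← e2, hrel u v, e1]
  have hkey : ∫ p, g p ∂(μ.prod μ) = ∫ p, e * g p ∂(μ.prod μ) :=
    complex_key hinv hk hgm hegm hgi hegi t false
      (by simp only [Bool.false_eq_true, if_false]; exact hmaster)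
  have hfinal : ∫ p, f p ∂(μ.prod μ) = e * ∫ p, f p ∂(μ.prod μ) := by
    calc ∫ p, f p ∂(μ.prod μ) = ∫ p, g p ∂(μ.prod μ) := integral_congr_ae hfg
      _ = ∫ p, e * g p ∂(μ.prod μ) := hkey
      _ = e * ∫ p, g p ∂(μ.prod μ) := integral_const_mul e _
      _ = e * ∫ p, f p ∂(μ.prod μ) := by rw [integral_congr_ae hfg]
  have h2 : (1 - e) * ∫ p, f p ∂(μ.prod μ) = 0 := by
    rw [sub_mul, one_mul]
    exact sub_eq_zero.mpr hfinal
  rcases mul_eq_zero.mp h2 with h | h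
  · exact ((he (sub_eq_zero.mp h).symm).elim)
  · exact h

lemma van1 (hinv : ∀ (a : F) (s : Set F), μ ((a + ·) '' s) = μ s)
    (t : F) (e : ℂ) (he : e ≠ 1) (f : F × F → ℂ)
    (hrel : ∀ u v : F, f (u + t, v) = e * f (u, v)) :
    ∫ p, f p ∂(μ.prod μ) = 0 := by
  by_cases hint : Integrable f (μ.prod μ)
  swap
  · exact integral_undef hint
  by_cases hk : AEMeasurable (fun u : F => Measure.map (Prod.mk u) μ) μ
  swap
  · have hzero : μ.prod μ = 0 := by
      rw [Measure.prod_def, Measure.bind, Measure.map_of_not_aemeasurable hk, Measure.join_zero]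
    rw [hzero]
    exact integral_zero_measure _
  obtain ⟨g, hgm, hfg⟩ : ∃ g, StronglyMeasurable g ∧ f =ᵐ[μ.prod μ] g :=
    ⟨hint.1.mk f, hint.1.stronglyMeasurable_mk, hint.1.ae_eq_mk⟩
  have hgi : Integrable g (μ.prod μ) := hint.congr hfg
  have hegi : Integrable (fun p => e * g p) (μ.prod μ) := hgi.const_mul e
  have hegm : StronglyMeasurable (fun p => e * g p) := stronglyMeasurable_const.mul hgm
  set T : Set (F × F) := toMeasurable (μ.prod μ) {p | f p ≠ g p} with hTdef
  have hTm : MeasurableSet T := measurableSet_toMeasurable _ _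
  have hT0 : μ.prod μ T = 0 := by
    rw [hTdef, measure_toMeasurable]
    exact ae_iff.mp hfg
  have hnull := null_slices hk hTm hT0
  have hmaster : ∀ᵐ u ∂μ, (fun v => e * g (u, v)) =ᵐ[μ] fun v => g (u + t, v) := by
    filter_upwards [hnull, ae_shift hinv hnull t] with u hu hut
    have hae2 : ∀ᵐ v ∂μ, (u, v) ∉ T ∧ (u + t, v) ∉ T := by
      rw [ae_iff]
      refine measure_mono_null ?_ (measure_union_null hu hut)
      intro v hv
      simp only [Set.mem_setOf_eq, not_and_or, not_not] at hv
      rcases hv with hv | hv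
      · exact Or.inl hv
      · exact Or.inr hv
    filter_upwards [hae2] with v hv
    have e1 : f (u, v) = g (u, v) := by
      by_contra hne
      exact hv.1 (subset_toMeasurable _ _ hne)
    have e2 : f (u + t, v) = g (u + t, v) := by
      by_contra hne
      exact hv.2 (subset_toMeasurable _ _ hne)
    rw [← e2, hrel u v, e1]
  have hkey : ∫ p, g p ∂(μ.prod μ) = ∫ p, e * g p ∂(μ.prod μ) :=
    complex_key hinv hk hgm hegm hgi hegi t true (by simp only [if_true]; exact hmaster)
  have hfinal : ∫ p, f p ∂(μ.prod μ) = e * ∫ p, f p ∂(μ.prod μ) := by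
    calc ∫ p, f p ∂(μ.prod μ) = ∫ p, g p ∂(μ.prod μ) := integral_congr_ae hfg
      _ = ∫ p, e * g p ∂(μ.prod μ) := hkey
      _ = e * ∫ p, g p ∂(μ.prod μ) := integral_const_mul e _
      _ = e * ∫ p, f p ∂(μ.prod μ) := by rw [integral_congr_ae hfg]
  have h2 : (1 - e) * ∫ p, f p ∂(μ.prod μ) = 0 := by
    rw [sub_mul, one_mul]
    exact sub_eq_zero.mpr hfinal
  rcases mul_eq_zero.mp h2 with h | h
  · exact ((he (sub_eq_zero.mp h).symm).elim)
  · exact h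

end Stmt17Aux

/-- With the Weil representation of `SL_2(F)` on `S(F²)` given by the operators
`ω(n(b))` and `ω(w)` above (and `ω(w⁻¹)` the inverse of `ω(w)`, given here as any operator
`Winv` inverting `ω(w)` at `φ^m`), the function `φ^m` is fixed by
`ω(n̄(c)) = ω(w⁻¹) ω(n(c)) ω(w)` for all `c ∈ P^{3m}` (i.e. `‖c‖ ≤ q^{-3m}`):
`ω(n̄(c)) φ^m = φ^m`. -/
theorem stmt_17 {F : Type*} [NormedField F] [MeasurableSpace F]
    (hultra : ∀ x y : F, ‖x + y‖ ≤ max ‖x‖ ‖y‖)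
    (μ : Measure F)
    (hinv : ∀ (a : F) (s : Set F), μ ((a + ·) '' s) = μ s)
    (hvol : μ {x : F | ‖x‖ ≤ 1} = 1)
    (q : ℝ) (hq : 1 < q)
    (ψ : F → ℂ) (hψadd : ∀ x y : F, ψ (x + y) = ψ x * ψ y)
    (hψ1 : ∀ x : F, ‖x‖ ≤ 1 → ψ x = 1)
    (hψnt : ∃ x : F, ‖x‖ ≤ q ∧ ψ x ≠ 1)
    (m : ℕ) (hm : 1 ≤ m)
    (c : F) (hc : ‖c‖ ≤ q ^ (-(3 * m : ℤ)))
    (Winv : (F → F → ℂ) → (F → F → ℂ))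
    (hWinv : Winv (omegaW μ ψ (phim q m)) = phim q m) :
    Winv (omegaN ψ c (omegaW μ ψ (phim q m))) = phim q m := by
  have key : omegaN ψ c (omegaW μ ψ (phim q m)) = omegaW μ ψ (phim q m) := by
    funext x y
    show ψ (-(c * x * y)) * omegaW μ ψ (phim q m) x y = omegaW μ ψ (phim q m) x y
    have hq0 : (0:ℝ) < q := lt_trans one_pos hq
    have hψ0 : ψ 0 = 1 := hψ1 0 (by simp)
    have hψneg : ∀ a : F, ψ a * ψ (-a) = 1 := fun a => by
      rw [← hψadd, add_neg_cancel]; exact hψ0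
    have hball : ∀ v t : F, ‖t‖ ≤ q ^ (-(m:ℤ)) →
        (‖v + t - 1‖ ≤ q ^ (-(m:ℤ)) ↔ ‖v - 1‖ ≤ q ^ (-(m:ℤ))) := by
      intro v t ht
      constructor
      · intro h
        have hrw : v - 1 = (v + t - 1) + (-t) := by ring
        rw [hrw]
        refine le_trans (hultra _ _) (max_le h ?_)
        rwa [norm_neg]
      · intro h
        have hrw : v + t - 1 = (v - 1) + t := by ring
        rw [hrw]
        exact le_trans (hultra _ _) (max_le h ht)
    by_cases hall : ∀ t : F, ‖t‖ ≤ q ^ (-(m:ℤ)) → ψ (x * t) = 1 ∧ ψ (y * t) = 1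
    · have hy2m : ‖y‖ ≤ q ^ (2 * m : ℤ) := by
        by_contra hy'
        push_neg at hy'
        have hy0 : y ≠ 0 := by
          intro h
          rw [h, norm_zero] at hy'
          exact absurd hy' (not_lt.mpr (by positivity))
        obtain ⟨x1, hx1n, hx1⟩ := hψnt
        have hyt : y * (x1 * y⁻¹) = x1 := by field_simp
        have htn : ‖x1 * y⁻¹‖ ≤ q ^ (-(m:ℤ)) := by
          rw [norm_mul, norm_inv]
          have h1 : ‖x1‖ * ‖y‖⁻¹ ≤ q * (q ^ (2*m:ℤ))⁻¹ := by
            apply mul_le_mul hx1n (inv_anti₀ (by positivity) hy'.le)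
              (by positivity) (le_of_lt hq0)
          refine le_trans h1 ?_
          rw [← zpow_neg, ← zpow_one_add₀ (ne_of_gt hq0)]
          refine zpow_le_zpow_right₀ hq.le ?_
          omega
        exact hx1 (by rw [← hyt]; exact (hall _ htn).2)
      have hct : ‖-(c * y)‖ ≤ q ^ (-(m:ℤ)) := by
        rw [norm_neg, norm_mul]
        calc ‖c‖ * ‖y‖ ≤ q ^ (-(3*m:ℤ)) * q ^ (2*m:ℤ) :=
            mul_le_mul hc hy2m (norm_nonneg _) (by positivity)
          _ = q ^ (-(m:ℤ)) := by
            rw [← zpow_add₀ (ne_of_gt hq0)]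
            congr 1
            push_cast
            ring
      have hone : ψ (-(c * x * y)) = 1 := by
        have h3 := (hall _ hct).1
        rwa [(by ring : x * -(c * y) = -(c * x * y))] at h3
      rw [hone, one_mul]
    · push_neg at hall
      obtain ⟨t0, ht0n, ht0⟩ := hall
      show ψ (-(c * x * y)) *
          (∫ p : F × F, phim q m p.1 p.2 * ψ (-(x * p.2 - y * p.1)) ∂(μ.prod μ)) = _
      by_cases hx : ψ (x * t0) = 1
      · have hy : ψ (y * t0) ≠ 1 := ht0 hx
        have hzero : (∫ p : F × F, phim q m p.1 p.2 * ψ (-(x * p.2 - y * p.1)) ∂(μ.prod μ)) = 0 := by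
          apply Stmt17Aux.van1 hinv t0 (ψ (y * t0)) hy
          intro u v
          show phim q m (u + t0) v * ψ (-(x * v - y * (u + t0))) =
            ψ (y * t0) * (phim q m u v * ψ (-(x * v - y * u)))
          have h1 : phim q m (u + t0) v = phim q m u v := by
            simp only [phim]
            rw [if_congr (and_congr_left' (hball u t0 ht0n)) rfl rfl]
          have h2 : ψ (-(x * v - y * (u + t0))) = ψ (-(x * v - y * u)) * ψ (y * t0) := by
            rw [← hψadd]
            congr 1
            ring
          rw [h1, h2]
          ring
        show ψ (-(c * x * y)) * (∫ p : F × F, phim q m p.1 p.2 * ψ (-(x * p.2 - y * p.1)) ∂(μ.prod μ)) =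
          (∫ p : F × F, phim q m p.1 p.2 * ψ (-(x * p.2 - y * p.1)) ∂(μ.prod μ))
        rw [hzero, mul_zero]
      · have he : ψ (-(x * t0)) ≠ 1 := by
          intro h1
          apply hx
          have h3 := hψneg (x * t0)
          rw [h1, mul_one] at h3
          exact h3
        have hzero : (∫ p : F × F, phim q m p.1 p.2 * ψ (-(x * p.2 - y * p.1)) ∂(μ.prod μ)) = 0 := by
          apply Stmt17Aux.van2 hinv t0 (ψ (-(x * t0))) he
          intro u v
          show phim q m u (v + t0) * ψ (-(x * (v + t0) - y * u)) =
            ψ (-(x * t0)) * (phim q m u v * ψ (-(x * v - y * u)))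
          have h1 : phim q m u (v + t0) = phim q m u v := by
            simp only [phim]
            rw [if_congr (and_congr_right' (hball v t0 ht0n)) rfl rfl]
          have h2 : ψ (-(x * (v + t0) - y * u)) = ψ (-(x * v - y * u)) * ψ (-(x * t0)) := by
            rw [← hψadd]
            congr 1
            ring
          rw [h1, h2]
          ring
        show ψ (-(c * x * y)) * (∫ p : F × F, phim q m p.1 p.2 * ψ (-(x * p.2 - y * p.1)) ∂(μ.prod μ)) =
          (∫ p : F × F, phim q m p.1 p.2 * ψ (-(x * p.2 - y * p.1)) ∂(μ.prod μ))
        rw [hzero, mul_zero]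
  rw [key]
  exact hWinv
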